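/- If (T,R) and (T',R) are two C2-pairs on the same finite set X having the same second component R, then (T,R) and (T',R) are isomorphic relational structures, i.e., there is a bijection f : X → X such that for all x,y ∈ X, x T y iff f(x) T' f(y), and x R y iff f(x) R f(y). -/

import Mathlib

open scoped Classical

namespace FishburnPaper

universe u

/-- A strict partial order: irreflexive and transitive. -/
def StrictOrd {X : Type u} (Q : X → X → Prop) : Prop :=
  (∀ x, ¬ Q x x) ∧ ∀ ⦃x y z⦄, Q x y → Q y z → Q x z

/-- `x` and `y` are comparable by the relation `Q`. -/
def Cmp {X : Type u} (Q : X → X → Prop) (x y : X) : Prop := Q x y ∨ Q y x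

/-- Exactly one of the three propositions holds. -/
def ExactlyOne3 (a b c : Prop) : Prop :=
  (a ∨ b ∨ c) ∧ ¬ (a ∧ b) ∧ ¬ (a ∧ c) ∧ ¬ (b ∧ c)

/-- A C1-pair: `S` and `R` are strict partial orders, any two distinct elements are
comparable by exactly one of them, and `x S y → y R z → x R z` for distinct `x,y,z`. -/
def IsC1Pair {X : Type u} (S R : X → X → Prop) : Prop :=
  StrictOrd S ∧ StrictOrd R ∧
  (∀ x y : X, x ≠ y → Xor' (Cmp S x y) (Cmp R x y)) ∧
  (∀ x y z : X, x ≠ y → y ≠ z → x ≠ z → S x y → R y z → R x z)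

/-- A C2-pair: `R` and `T ∪ R` are strict partial orders, any two distinct elements are
comparable by exactly one of `T` and `R`, and the two three-element patterns are forbidden. -/
def IsC2Pair {X : Type u} (T R : X → X → Prop) : Prop :=
  StrictOrd R ∧ StrictOrd (fun x y => T x y ∨ R x y) ∧
  (∀ x y : X, x ≠ y → Xor' (Cmp T x y) (Cmp R x y)) ∧
  (¬ ∃ x y z : X, x ≠ y ∧ y ≠ z ∧ x ≠ z ∧ T x y ∧ T x z ∧ R y z) ∧
  (¬ ∃ x y z : X, x ≠ y ∧ y ≠ z ∧ x ≠ z ∧ T y x ∧ T z x ∧ R y z)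

/-- A Fishburn triple: `S`, `R` and `T ∪ R` are strict partial orders, any two distinct
elements are comparable by exactly one of `T`, `S`, `R`, the axioms C1c, C1c* hold,
and the two three-element patterns of axiom C2c are forbidden. -/
def IsFishburnTriple {X : Type u} (T S R : X → X → Prop) : Prop :=
  StrictOrd S ∧ StrictOrd R ∧ StrictOrd (fun x y => T x y ∨ R x y) ∧
  (∀ x y : X, x ≠ y → ExactlyOne3 (Cmp T x y) (Cmp S x y) (Cmp R x y)) ∧
  (∀ x y z : X, x ≠ y → y ≠ z → x ≠ z → S x y → R y z → R x z) ∧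
  (∀ x y z : X, x ≠ y → y ≠ z → x ≠ z → S x y → R z y → R z x) ∧
  (¬ ∃ x y z : X, x ≠ y ∧ y ≠ z ∧ x ≠ z ∧ T x y ∧ T x z ∧ R y z) ∧
  (¬ ∃ x y z : X, x ≠ y ∧ y ≠ z ∧ x ≠ z ∧ T y x ∧ T z x ∧ R z y)

/-- `R` contains the poset 2+2: four distinct elements `a,b,c,d` with `a R b`, `c R d`,
and no other ordered pair among them in `R`. -/
def Contains22 {X : Type u} (R : X → X → Prop) : Prop :=
  ∃ a b c d : X, a ≠ b ∧ a ≠ c ∧ a ≠ d ∧ b ≠ c ∧ b ≠ d ∧ c ≠ d ∧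
    R a b ∧ R c d ∧
    ¬ R b a ∧ ¬ R a c ∧ ¬ R c a ∧ ¬ R a d ∧ ¬ R d a ∧
    ¬ R b c ∧ ¬ R c b ∧ ¬ R b d ∧ ¬ R d b ∧ ¬ R d c

/-- `R` contains the poset 3+1: four distinct elements `a,b,c,d` with `a R b`, `b R c`,
`a R c`, and `d` incomparable to each of `a,b,c`. -/
def Contains31 {X : Type u} (R : X → X → Prop) : Prop :=
  ∃ a b c d : X, a ≠ b ∧ a ≠ c ∧ a ≠ d ∧ b ≠ c ∧ b ≠ d ∧ c ≠ d ∧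
    R a b ∧ R b c ∧ R a c ∧ ¬ Cmp R d a ∧ ¬ Cmp R d b ∧ ¬ Cmp R d c

/-- `R` contains the poset N: four distinct elements `u,v,x,y` with `u R v`, `u R y`,
`x R v`, and no other ordered pair among them in `R`. -/
def ContainsN {X : Type u} (R : X → X → Prop) : Prop :=
  ∃ u v x y : X, u ≠ v ∧ u ≠ x ∧ u ≠ y ∧ v ≠ x ∧ v ≠ y ∧ x ≠ y ∧
    R u v ∧ R u y ∧ R x v ∧
    ¬ R v u ∧ ¬ R u x ∧ ¬ R x u ∧ ¬ R y u ∧ ¬ R v x ∧ ¬ R v y ∧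
    ¬ R y v ∧ ¬ R x y ∧ ¬ R y x

/-- Number of `Q`-maximal elements. -/
noncomputable def mmax {X : Type u} (Q : X → X → Prop) : ℕ :=
  Nat.card {x : X // ∀ y : X, ¬ Q x y}

/-- A Fishburn matrix: upper triangular (rows numbered top to bottom), every row and
every column contains a nonzero entry. -/
def IsFishburn {m : ℕ} (M : Fin m → Fin m → ℕ) : Prop :=
  (∀ i j : Fin m, j < i → M i j = 0) ∧
  (∀ i : Fin m, ∃ j : Fin m, M i j ≠ 0) ∧
  (∀ j : Fin m, ∃ i : Fin m, M i j ≠ 0)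

/-- A cell `(i, j)` of an `m × m` matrix. -/
abbrev Cell (m : ℕ) := Fin m × Fin m

/-- Cell `c = (i,j)` is smaller than `c' = (i',j')` if `j < i'`. -/
def Smaller {m : ℕ} (c c' : Cell m) : Prop := c.2 < c'.1

/-- Cells `c` and `c'` are incomparable: neither is smaller than the other. -/
def Incomp {m : ℕ} (c c' : Cell m) : Prop := ¬ Smaller c c' ∧ ¬ Smaller c' c

/-- `c = (i,j)` is strictly SW of `c' = (i',j')` : `i > i'` and `j < j'`. -/
def StrictSW {m : ℕ} (c c' : Cell m) : Prop := c'.1 < c.1 ∧ c.2 < c'.2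

/-- `c = (i,j)` is weakly SW of `c' = (i',j')` : `c ≠ c'`, `i ≥ i'` and `j ≤ j'`. -/
def WeakSW {m : ℕ} (c c' : Cell m) : Prop := c ≠ c' ∧ c'.1 ≤ c.1 ∧ c.2 ≤ c'.2

/-- `c = (i,j)` is strictly NW of `c' = (i',j')` : incomparable, `i < i'` and `j < j'`. -/
def StrictNW {m : ℕ} (c c' : Cell m) : Prop := Incomp c c' ∧ c.1 < c'.1 ∧ c.2 < c'.2

/-- `c = (i,j)` is weakly NW of `c' = (i',j')` : `c ≠ c'`, incomparable, `i ≤ i'`, `j ≤ j'`. -/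
def WeakNW {m : ℕ} (c c' : Cell m) : Prop := c ≠ c' ∧ Incomp c c' ∧ c.1 ≤ c'.1 ∧ c.2 ≤ c'.2

/-- A nonzero cell of `M` (on or above the diagonal). -/
def NonzeroCell {m : ℕ} (M : Fin m → Fin m → ℕ) (c : Cell m) : Prop :=
  c.1 ≤ c.2 ∧ M c.1 c.2 ≠ 0

/-- The ground set `X_M = {(i,j,a) : i ≤ j, a < M i j}` of the poset induced by `M`. -/
abbrev XM {m : ℕ} (M : Fin m → Fin m → ℕ) : Type :=
  {x : Fin m × Fin m × ℕ // x.1 ≤ x.2.1 ∧ x.2.2 < M x.1 x.2.1}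

/-- The cell representing an element of `X_M`. -/
def cellOf {m : ℕ} {M : Fin m → Fin m → ℕ} (x : XM M) : Cell m := (x.1.1, x.1.2.1)

/-- The interval order induced by `M`: `(i,j,a) R (i',j',a')` iff `j < i'`. -/
def Rind {m : ℕ} {M : Fin m → Fin m → ℕ} (x y : XM M) : Prop := x.1.2.1 < y.1.1

/-- A nonzero cell with no other nonzero cell weakly NE of it. -/
def IsWNECell {m : ℕ} (M : Fin m → Fin m → ℕ) (c : Cell m) : Prop :=
  NonzeroCell M c ∧ ∀ c' : Cell m, NonzeroCell M c' → c' ≠ c → ¬ WeakSW c c'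

/-- A nonzero cell with no other nonzero cell strictly NE of it. -/
def IsSNECell {m : ℕ} (M : Fin m → Fin m → ℕ) (c : Cell m) : Prop :=
  NonzeroCell M c ∧ ∀ c' : Cell m, NonzeroCell M c' → c' ≠ c → ¬ StrictSW c c'

/-- A nonzero cell with no other nonzero cell strictly SE of it. -/
def IsSSECell {m : ℕ} (M : Fin m → Fin m → ℕ) (c : Cell m) : Prop :=
  NonzeroCell M c ∧ ∀ c' : Cell m, NonzeroCell M c' → c' ≠ c → ¬ StrictNW c c'

/-- A nonzero cell with no other nonzero cell weakly SE of it. -/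
def IsWSECell {m : ℕ} (M : Fin m → Fin m → ℕ) (c : Cell m) : Prop :=
  NonzeroCell M c ∧ ∀ c' : Cell m, NonzeroCell M c' → c' ≠ c → ¬ WeakNW c c'

/-- The number of wNE-cells of `M`. -/
noncomputable def wNEcount {m : ℕ} (M : Fin m → Fin m → ℕ) : ℕ :=
  Nat.card {c : Cell m // IsWNECell M c}

/-- The number of wSE-cells of `M`. -/
noncomputable def wSEcount {m : ℕ} (M : Fin m → Fin m → ℕ) : ℕ :=
  Nat.card {c : Cell m // IsWSECell M c}

/-- The total weight of the sNE-cells of `M`. -/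
noncomputable def sNEweight {m : ℕ} (M : Fin m → Fin m → ℕ) : ℕ :=
  ∑ c : Cell m, if IsSNECell M c then M c.1 c.2 else 0

/-- The total weight of the sSE-cells of `M`. -/
noncomputable def sSEweight {m : ℕ} (M : Fin m → Fin m → ℕ) : ℕ :=
  ∑ c : Cell m, if IsSSECell M c then M c.1 c.2 else 0

/-- The weight of `M`: the sum of all entries. -/
def weight {m : ℕ} (M : Fin m → Fin m → ℕ) : ℕ := ∑ c : Cell m, M c.1 c.2

/-- The weight of the last column of `M`. -/
def lastColWeight {m : ℕ} (M : Fin m → Fin m → ℕ) : ℕ :=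
  ∑ c : Cell m, if c.2.val = m - 1 then M c.1 c.2 else 0

/-- The total weight of the columns of `M` preceding the last one. -/
def prevColWeight {m : ℕ} (M : Fin m → Fin m → ℕ) : ℕ :=
  ∑ c : Cell m, if c.2.val < m - 1 then M c.1 c.2 else 0

/-- The first component of the F1-triple of `M`: `x T₁ y` iff `c_x` strictly NW of `c_y`. -/
def T1 {m : ℕ} {M : Fin m → Fin m → ℕ} (x y : XM M) : Prop :=
  StrictNW (cellOf x) (cellOf y)

/-- The second component of the F1-triple of `M`: `x S₁ y` iff `c_x` weakly SW of `c_y`,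
or `c_x = c_y` and the third coordinate of `x` is smaller than that of `y`. -/
def S1 {m : ℕ} {M : Fin m → Fin m → ℕ} (x y : XM M) : Prop :=
  WeakSW (cellOf x) (cellOf y) ∨ (cellOf x = cellOf y ∧ x.1.2.2 < y.1.2.2)

/-- The first component of the F2-triple of `M`: `x T₂ y` iff `c_x` weakly NW of `c_y`,
or `c_x = c_y` and the third coordinate of `x` is smaller than that of `y`. -/
def T2 {m : ℕ} {M : Fin m → Fin m → ℕ} (x y : XM M) : Prop :=
  WeakNW (cellOf x) (cellOf y) ∨ (cellOf x = cellOf y ∧ x.1.2.2 < y.1.2.2)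

/-- The second component of the F2-triple of `M`: `x S₂ y` iff `c_x` strictly SW of `c_y`. -/
def S2 {m : ℕ} {M : Fin m → Fin m → ℕ} (x y : XM M) : Prop :=
  StrictSW (cellOf x) (cellOf y)

/-- C1-pairs on `Fin n`. -/
abbrev C1PairsOn (n : ℕ) :=
  {p : (Fin n → Fin n → Prop) × (Fin n → Fin n → Prop) // IsC1Pair p.1 p.2}

/-- C2-pairs on `Fin n`. -/
abbrev C2PairsOn (n : ℕ) :=
  {p : (Fin n → Fin n → Prop) × (Fin n → Fin n → Prop) // IsC2Pair p.1 p.2}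

/-- Isomorphism of C1-pairs. -/
def isoC1 {n : ℕ} (p q : C1PairsOn n) : Prop :=
  ∃ f : Fin n ≃ Fin n, ∀ x y : Fin n,
    (p.1.1 x y ↔ q.1.1 (f x) (f y)) ∧ (p.1.2 x y ↔ q.1.2 (f x) (f y))

/-- Isomorphism of C2-pairs. -/
def isoC2 {n : ℕ} (p q : C2PairsOn n) : Prop :=
  ∃ f : Fin n ≃ Fin n, ∀ x y : Fin n,
    (p.1.1 x y ↔ q.1.1 (f x) (f y)) ∧ (p.1.2 x y ↔ q.1.2 (f x) (f y))

/-- Fishburn matrices of weight `n` (of arbitrary size `m ≥ 1`). -/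
abbrev FishburnW (n : ℕ) :=
  {p : Σ m : ℕ, Fin m → Fin m → ℕ // 0 < p.1 ∧ IsFishburn p.2 ∧ weight p.2 = n}


section Aux

variable {X : Type u} {T R : X → X → Prop}

lemma forceD (h : IsC2Pair T R) {x y z : X} (hxy : x ≠ y) (h1 : ¬ R x y) (h2 : ¬ R y x)
    (hz1 : R z x) (hz2 : ¬ R z y) : T y x := by
  obtain ⟨hR, hL, hXor, hP4, hP5⟩ := h
  have hzx : z ≠ x := fun e => hR.1 x (e ▸ hz1)
  have hzy : z ≠ y := fun e => h2 (e ▸ hz1)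
  have hyz : ¬ R y z := fun hh => h2 (hR.2 hh hz1)
  have cT1 : Cmp T x y := by
    rcases hXor x y hxy with ⟨c, _⟩ | ⟨c, _⟩
    · exact c
    · exact absurd c (by rintro (c | c) <;> [exact h1 c; exact h2 c])
  have cT2 : Cmp T y z := by
    rcases hXor y z (Ne.symm hzy) with ⟨c, _⟩ | ⟨c, _⟩
    · exact c
    · exact absurd c (by rintro (c | c) <;> [exact hyz c; exact hz2 c])
  rcases cT1 with hTxy | hTyx
  · rcases cT2 with hTyz | hTzy
    · exact absurd (hL.2 (hL.2 (Or.inl hTxy) (Or.inl hTyz)) (Or.inr hz1)) (hL.1 x)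
    · exact absurd ⟨y, z, x, Ne.symm hzy, hzx, Ne.symm hxy, hTzy, hTxy, hz1⟩ hP5
  · exact hTyx

lemma forceU (h : IsC2Pair T R) {x y z : X} (hxy : x ≠ y) (h1 : ¬ R x y) (h2 : ¬ R y x)
    (hz1 : R x z) (hz2 : ¬ R y z) : T x y := by
  obtain ⟨hR, hL, hXor, hP4, hP5⟩ := h
  have hzx : z ≠ x := fun e => hR.1 x (e ▸ hz1)
  have hzy : z ≠ y := fun e => h1 (e ▸ hz1)
  have hzy' : ¬ R z y := fun hh => h1 (hR.2 hz1 hh)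
  have cT1 : Cmp T x y := by
    rcases hXor x y hxy with ⟨c, _⟩ | ⟨c, _⟩
    · exact c
    · exact absurd c (by rintro (c | c) <;> [exact h1 c; exact h2 c])
  have cT2 : Cmp T y z := by
    rcases hXor y z (Ne.symm hzy) with ⟨c, _⟩ | ⟨c, _⟩
    · exact c
    · exact absurd c (by rintro (c | c) <;> [exact hz2 c; exact hzy' c])
  rcases cT1 with hTxy | hTyx
  · exact hTxy
  · rcases cT2 with hTyz | hTzy
    · exact absurd ⟨y, x, z, Ne.symm hxy, fun e => hR.1 x (e ▸ hz1), Ne.symm hzy, hTyx, hTyz, hz1⟩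
        hP4
    · exact absurd (hL.2 (hL.2 (Or.inl hTzy) (Or.inl hTyx)) (Or.inr hz1)) (hL.1 z)

lemma toFinEquiv {α : Type u} [Fintype α] (t : α → α → Prop) (ht : IsStrictTotalOrder α t) :
    ∃ φ : α ≃ Fin (Fintype.card α), ∀ a b, t a b ↔ φ a < φ b := by
  letI : DecidableRel t := Classical.decRel t
  letI : IsStrictTotalOrder α t := ht
  letI : LinearOrder α := linearOrderOfSTO t
  refine ⟨(monoEquivOfFin α rfl).symm.toEquiv, fun a b => ?_⟩
  exact ((monoEquivOfFin α rfl).symm.lt_iff_lt).symm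

lemma exists_rel_equiv {α : Type u} [Finite α] (t t' : α → α → Prop)
    (ht : IsStrictTotalOrder α t) (ht' : IsStrictTotalOrder α t') :
    ∃ φ : α ≃ α, ∀ a b, t a b ↔ t' (φ a) (φ b) := by
  haveI : Fintype α := Fintype.ofFinite α
  obtain ⟨φ, hφ⟩ := toFinEquiv t ht
  obtain ⟨ψ, hψ⟩ := toFinEquiv t' ht'
  refine ⟨φ.trans ψ.symm, fun a b => (hφ a b).trans ?_⟩
  rw [hψ]; simp

end Aux

/-- Lemma 5 (lem-C2enum), uniqueness: two C2-pairs with the same second component are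
isomorphic relational structures. -/
theorem stmt_4 {X : Type u} [Finite X] (T T' R : X → X → Prop)
    (h : IsC2Pair T R) (h' : IsC2Pair T' R) :
    ∃ f : X ≃ X, ∀ x y : X, (T x y ↔ T' (f x) (f y)) ∧ (R x y ↔ R (f x) (f y)) := by
  obtain ⟨hR, hL, hXor, hP4, hP5⟩ := h
  obtain ⟨hR', hL', hXor', hP4', hP5'⟩ := h'
  -- basic facts
  have irreflT : ∀ a, ¬ T a a := fun a ha => hL.1 a (Or.inl ha)
  have irreflT' : ∀ a, ¬ T' a a := fun a ha => hL'.1 a (Or.inl ha)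
  have asymT : ∀ {a b : X}, T a b → ¬ T b a := fun hab hba =>
    hL.1 _ (hL.2 (Or.inl hab) (Or.inl hba))
  have asymT' : ∀ {a b : X}, T' a b → ¬ T' b a := fun hab hba =>
    hL'.1 _ (hL'.2 (Or.inl hab) (Or.inl hba))
  have cmpT : ∀ a b : X, a ≠ b → ¬ R a b → ¬ R b a → T a b ∨ T b a := by
    intro a b hab h1 h2
    rcases hXor a b hab with ⟨c, _⟩ | ⟨c, _⟩
    · exact c
    · exact absurd c (by rintro (c | c) <;> [exact h1 c; exact h2 c])
  have cmpT' : ∀ a b : X, a ≠ b → ¬ R a b → ¬ R b a → T' a b ∨ T' b a := by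
    intro a b hab h1 h2
    rcases hXor' a b hab with ⟨c, _⟩ | ⟨c, _⟩
    · exact c
    · exact absurd c (by rintro (c | c) <;> [exact h1 c; exact h2 c])
  have notT_of_R : ∀ a b : X, R a b → ¬ T a b ∧ ¬ T b a := by
    intro a b hab
    have hne : a ≠ b := fun e => hR.1 a (e ▸ hab)
    rcases hXor a b hne with ⟨_, hc⟩ | ⟨_, hc⟩
    · exact absurd (Or.inl hab) hc
    · exact ⟨fun ht => hc (Or.inl ht), fun ht => hc (Or.inr ht)⟩
  have notT'_of_R : ∀ a b : X, R a b → ¬ T' a b ∧ ¬ T' b a := by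
    intro a b hab
    have hne : a ≠ b := fun e => hR.1 a (e ▸ hab)
    rcases hXor' a b hne with ⟨_, hc⟩ | ⟨_, hc⟩
    · exact absurd (Or.inl hab) hc
    · exact ⟨fun ht => hc (Or.inl ht), fun ht => hc (Or.inr ht)⟩
  -- the equivalence relation: same down-set and up-set
  let s : Setoid X := ⟨fun a b => (∀ z, R z a ↔ R z b) ∧ (∀ z, R a z ↔ R b z),
    ⟨fun a => ⟨fun z => Iff.rfl, fun z => Iff.rfl⟩,
     fun hab => ⟨fun z => (hab.1 z).symm, fun z => (hab.2 z).symm⟩,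
     fun hab hbc => ⟨fun z => (hab.1 z).trans (hbc.1 z), fun z => (hab.2 z).trans (hbc.2 z)⟩⟩⟩
  have incomp_of_e : ∀ a b : X, s.r a b → a ≠ b → ¬ R a b ∧ ¬ R b a := by
    intro a b he hne
    exact ⟨fun hab => hR.1 b ((he.2 b).mp hab), fun hba => hR.1 b ((he.1 b).mp hba)⟩
  -- on each class, T and T' are strict total orders
  have key : ∀ q : Quotient s, ∃ φ : {x : X // Quotient.mk s x = q} ≃ {x // Quotient.mk s x = q},
      ∀ a b, T a.1 b.1 ↔ T' (φ a).1 (φ b).1 := by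
    intro q
    have hsto : ∀ (U : X → X → Prop), (∀ a, ¬ U a a) → (∀ {a b : X}, U a b → ¬ U b a) →
        (∀ a b : X, a ≠ b → ¬ R a b → ¬ R b a → U a b ∨ U b a) →
        (∀ {a b c : X}, U a b → U b c → ¬ U c a) →
        IsStrictTotalOrder {x : X // Quotient.mk s x = q} (fun a b => U a.1 b.1) := by
      intro U hirr hasym hcmp hnc
      have tot : ∀ a b : {x : X // Quotient.mk s x = q}, a ≠ b → U a.1 b.1 ∨ U b.1 a.1 := by
        intro a b hab
        have hne : a.1 ≠ b.1 := fun e => hab (Subtype.ext e)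
        have he : s.r a.1 b.1 := Quotient.exact (a.2.trans b.2.symm)
        obtain ⟨h1, h2⟩ := incomp_of_e a.1 b.1 he hne
        exact hcmp a.1 b.1 hne h1 h2
      refine { trichotomous := ?_, irrefl := fun a => hirr a.1, trans := ?_ }
      · intro a b
        rcases eq_or_ne a b with rfl | hab
        · exact fun _ _ => rfl
        · rcases tot a b hab with hh | hh
          · exact fun h _ => absurd hh h
          · exact fun _ h => absurd hh h
      · intro a b c hab hbc
        have hac : a ≠ c := by rintro rfl; exact hasym hab hbc
        rcases tot a c hac with hh | hh
        · exact hh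
        · exact absurd hh (hnc hab hbc)
    exact exists_rel_equiv _ _
      (hsto T irreflT (fun hab => asymT hab) cmpT
        (fun hab hbc hca => hL.1 _ (hL.2 (hL.2 (Or.inl hab) (Or.inl hbc)) (Or.inl hca))))
      (hsto T' irreflT' (fun hab => asymT' hab) cmpT'
        (fun hab hbc hca => hL'.1 _ (hL'.2 (hL'.2 (Or.inl hab) (Or.inl hbc)) (Or.inl hca))))
  choose g hg using key
  set f0 : X → X := fun x => (g (Quotient.mk s x) ⟨x, rfl⟩).1 with hf0
  have hclass : ∀ x, Quotient.mk s (f0 x) = Quotient.mk s x := fun x => (g _ ⟨x, rfl⟩).2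
  have he : ∀ x, s.r (f0 x) x := fun x => Quotient.exact (hclass x)
  have hRpres : ∀ x y, R x y ↔ R (f0 x) (f0 y) := by
    intro x y
    exact (((he y).1 (f0 x)).trans ((he x).2 y)).symm
  have hcast : ∀ (q q' : Quotient s) (hqq : q = q') (a : {x // Quotient.mk s x = q})
      (b : {x // Quotient.mk s x = q'}), a.1 = b.1 → (g q a).1 = (g q' b).1 := by
    rintro q q' rfl a b hab
    rw [Subtype.ext hab]
  have hsame : ∀ x y : X, Quotient.mk s x = Quotient.mk s y → (T x y ↔ T' (f0 x) (f0 y)) := by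
    intro x y hq
    have h1 := hg (Quotient.mk s x) ⟨x, rfl⟩ ⟨y, hq.symm⟩
    have h2 : (g (Quotient.mk s x) ⟨y, hq.symm⟩).1 = (g (Quotient.mk s y) ⟨y, rfl⟩).1 :=
      hcast _ _ hq ⟨y, hq.symm⟩ ⟨y, rfl⟩ rfl
    rw [h2] at h1
    exact h1
  have hne_f : ∀ x y : X, Quotient.mk s x ≠ Quotient.mk s y → f0 x ≠ f0 y := by
    intro x y hq hf
    exact hq (((hclass x).symm.trans (by rw [hf])).trans (hclass y))
  have hcross : ∀ x y : X, ¬ R x y → ¬ R y x → x ≠ y →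
      Quotient.mk s x ≠ Quotient.mk s y → T x y → T' (f0 x) (f0 y) := by
    intro x y h1 h2 hxy hq hT
    have hfne : f0 x ≠ f0 y := hne_f x y hq
    have hf1 : ¬ R (f0 x) (f0 y) := fun hh => h1 ((hRpres x y).mpr hh)
    have hf2 : ¬ R (f0 y) (f0 x) := fun hh => h2 ((hRpres y x).mpr hh)
    have hwit : (∃ z, ¬(R z x ↔ R z y)) ∨ ∃ z, ¬(R x z ↔ R y z) := by
      by_contra hc
      push_neg at hc
      exact hq (Quotient.sound ⟨fun z => hc.1 z, fun z => hc.2 z⟩)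
    rcases hwit with ⟨z, hz⟩ | ⟨z, hz⟩
    · by_cases hzx : R z x
      · have hzy : ¬ R z y := fun hh => hz ⟨fun _ => hh, fun _ => hzx⟩
        exact absurd (forceD ⟨hR, hL, hXor, hP4, hP5⟩ hxy h1 h2 hzx hzy) (asymT hT)
      · have hzy : R z y := by
          by_contra hzy
          exact hz ⟨fun hh => absurd hh hzx, fun hh => absurd hh hzy⟩
        have hzfy : R z (f0 y) := ((he y).1 z).mpr hzy
        have hzfx : ¬ R z (f0 x) := fun hh => hzx (((he x).1 z).mp hh)
        exact forceD ⟨hR', hL', hXor', hP4', hP5'⟩ hfne.symm hf2 hf1 hzfy hzfx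
    · by_cases hxz : R x z
      · have hyz : ¬ R y z := fun hh => hz ⟨fun _ => hh, fun _ => hxz⟩
        have hfxz : R (f0 x) z := ((he x).2 z).mpr hxz
        have hfyz : ¬ R (f0 y) z := fun hh => hyz (((he y).2 z).mp hh)
        exact forceU ⟨hR', hL', hXor', hP4', hP5'⟩ hfne hf1 hf2 hfxz hfyz
      · have hyz : R y z := by
          by_contra hyz
          exact hz ⟨fun hh => absurd hh hxz, fun hh => absurd hh hyz⟩
        have hxz' : ¬ R x z := hxz
        exact absurd (forceU ⟨hR, hL, hXor, hP4, hP5⟩ hxy.symm h2 h1 hyz hxz') (asymT hT)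
  have hTpres : ∀ x y, T x y ↔ T' (f0 x) (f0 y) := by
    intro x y
    rcases eq_or_ne x y with rfl | hxy
    · exact iff_of_false (irreflT x) (irreflT' (f0 x))
    by_cases hRxy : R x y
    · exact iff_of_false (notT_of_R x y hRxy).1
        (notT'_of_R (f0 x) (f0 y) ((hRpres x y).mp hRxy)).1
    by_cases hRyx : R y x
    · exact iff_of_false (notT_of_R y x hRyx).2
        (notT'_of_R (f0 y) (f0 x) ((hRpres y x).mp hRyx)).2
    by_cases hq : Quotient.mk s x = Quotient.mk s y
    · exact hsame x y hq
    · constructor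
      · exact hcross x y hRxy hRyx hxy hq
      · intro hT'
        by_contra hnT
        have hTyx : T y x := (cmpT x y hxy hRxy hRyx).resolve_left hnT
        exact asymT' (hcross y x hRyx hRxy hxy.symm (Ne.symm hq) hTyx) hT'
  have hinj : Function.Injective f0 := by
    intro a b hab
    by_contra hne
    rcases hXor a b hne with ⟨c, _⟩ | ⟨c, _⟩
    · rcases c with c | c
      · have hh := (hTpres a b).mp c; rw [hab] at hh; exact irreflT' _ hh
      · have hh := (hTpres b a).mp c; rw [hab] at hh; exact irreflT' _ hh
    · rcases c with c | c
      · have hh := (hRpres a b).mp c; rw [hab] at hh; exact hR.1 _ hh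
      · have hh := (hRpres b a).mp c; rw [hab] at hh; exact hR.1 _ hh
  obtain ⟨f, hf⟩ : ∃ f : X ≃ X, ∀ x, f x = f0 x :=
    ⟨Equiv.ofBijective f0 (Finite.injective_iff_bijective.mp hinj), fun x => rfl⟩
  exact ⟨f, fun x y => by rw [hf x, hf y]; exact ⟨hTpres x y, hRpres x y⟩⟩

end FishburnPaper
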